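/- arXiv:2108.11279 — 2 statements merged into one kernel-verified Lean document; each statement's English description precedes it below -/
import Mathlib

section
/- Let G = (A, φ, w) be a D0L-system with non-erasing morphism φ, and let p > 0 and q ≥ 0 be integers with p > q such that alph(φ^i(a)) = alph(φ^{i+p}(a)) for every letter a of w and every i ≥ q; for 0 ≤ i < q + p let G_i = (A_i, φ^p, φ^i(w)) with A_i = ∪_{a ∈ alph(w)} alph(φ^i(a)). If 𝐰 is an infinite word all of whose prefixes lie in L_G, then there exists i with q ≤ i < q + p such that every prefix of 𝐰 lies in L_{G_i}. -/
/-- The extension of the morphism given by `φ` on letters to a morphism on words. -/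
def extM {A B : Type*} (φ : A → List B) (w : List A) : List B := w.flatMap φ

/-- The `k`-th power `u^k` of a word `u`. -/
def wpow {A : Type*} (u : List A) (k : ℕ) : List A := (List.replicate k u).flatten

/-- A word `v` is primitive if `v = u^k` implies `k = 1`. -/
def Primitive {A : Type*} (v : List A) : Prop :=
  v ≠ [] ∧ ∀ (u : List A) (k : ℕ), v = wpow u k → k = 1

/-- The language of the D0L-system `(A, φ, w)`: all factors of the words `φ^n(w)`. -/
def LangD0L {A : Type*} (φ : A → List A) (w : List A) : Set (List A) :=
  {v | ∃ n : ℕ, v <:+: (extM φ)^[n] w}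

/-- `fact(Ψ(L))`: all factors of `Ψ`-images of elements of `L`. -/
def factImg {A B : Type*} (Ψ : A → List B) (L : Set (List A)) : Set (List B) :=
  {v | ∃ u ∈ L, v <:+: extM Ψ u}

/-- The language of the HD0L-system `(A, φ, w, Ψ)`. -/
def LangHD0L {A B : Type*} (φ : A → List A) (w : List A) (Ψ : A → List B) : Set (List B) :=
  factImg Ψ (LangD0L φ w)

/-- A morphism is non-erasing if no letter is mapped to the empty word. -/
def NonErasing {A B : Type*} (φ : A → List B) : Prop := ∀ a, φ a ≠ []

/-- A letter `b` is bounded (w.r.t. `φ`) if the lengths `|φ^n(b)|` are bounded. -/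
def BddLetter {A : Type*} (φ : A → List A) (b : A) : Prop :=
  ∃ C : ℕ, ∀ n : ℕ, ((extM φ)^[n] [b]).length ≤ C

/-- The set of letters occurring in a word. -/
def alph {A : Type*} (u : List A) : Set A := {a | a ∈ u}

/-- `alph(φ(S))` for a set of letters `S`: letters occurring in `φ(b)` for some `b ∈ S`. -/
def alphIm {A : Type*} (φ : A → List A) (S : Set A) : Set A := ⋃ b ∈ S, alph (φ b)

/-- A D0L-system is pushy if its language contains infinitely many words over bounded letters. -/
def Pushy {A : Type*} (φ : A → List A) (w : List A) : Prop :=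
  {v ∈ LangD0L φ w | ∀ a ∈ v, BddLetter φ a}.Infinite

/-- A factorial language `L` is uniformly recurrent: for every `n` there is `K` such that
every element of `L` of length `K` contains every element of `L` of length `n` as a factor. -/
def UnifRec {A : Type*} (L : Set (List A)) : Prop :=
  ∀ n : ℕ, ∃ K : ℕ, ∀ u ∈ L, u.length = K → ∀ v ∈ L, v.length = n → v <:+: u

/-- Vertices of the tree of invariant subalphabets of `φ`: nonempty sets `S` with
`alph(φ(S)) = S` containing an unbounded letter `a` with `alph(φ(a)) = S`. -/
def IsVertex {A : Type*} (φ : A → List A) (S : Set A) : Prop :=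
  S.Nonempty ∧ alphIm φ S = S ∧ ∃ a ∈ S, ¬ BddLetter φ a ∧ alph (φ a) = S

/-- Leaves of the tree of invariant subalphabets: minimal vertices w.r.t. inclusion. -/
def IsLeaf {A : Type*} (φ : A → List A) (S : Set A) : Prop :=
  IsVertex φ S ∧ ∀ T, IsVertex φ T → T ⊆ S → T = S

/-- Two words are conjugate: `u = xy` and `v = yx`. -/
def Conj {A : Type*} (u v : List A) : Prop := ∃ x y : List A, u = x ++ y ∧ v = y ++ x

/-- The prefix of length `n` of an infinite word. -/
def prefW {A : Type*} (w : ℕ → A) (n : ℕ) : List A := (List.range n).map w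

lemma extM_append {A B : Type*} (φ : A → List B) (u v : List A) :
    extM φ (u ++ v) = extM φ u ++ extM φ v := List.flatMap_append ..

lemma iter_append {A : Type*} (φ : A → List A) (n : ℕ) (u v : List A) :
    (extM φ)^[n] (u ++ v) = (extM φ)^[n] u ++ (extM φ)^[n] v := by
  induction n generalizing u v with
  | zero => simp
  | succ n ih => simp [Function.iterate_succ_apply, extM_append, ih]

lemma iter_nil {A : Type*} (φ : A → List A) (n : ℕ) : (extM φ)^[n] ([] : List A) = [] := by
  induction n with
  | zero => rfl
  | succ n ih => simp [Function.iterate_succ_apply, extM, ih]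

lemma extM_pow {A : Type*} (φ : A → List A) (p : ℕ) (u : List A) :
    extM (fun a => (extM φ)^[p] [a]) u = (extM φ)^[p] u := by
  induction u with
  | nil => simp [extM, iter_nil]
  | cons a u ih =>
      have : a :: u = [a] ++ u := rfl
      rw [this, extM_append, iter_append, ih]; simp [extM]

lemma prefW_prefix {A : Type*} (w : ℕ → A) {m n : ℕ} (h : m ≤ n) :
    prefW w m <+: prefW w n := by
  have : List.range m <+: List.range n := by
    rw [show List.range m = (List.range n).take m by simp [List.take_range, Nat.min_eq_left h]]
    exact List.take_prefix _ _
  exact this.map w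

lemma iterPhi {A : Type*} (φ : A → List A) (p k : ℕ) (u : List A) :
    (extM (fun a => (extM φ)^[p] [a]))^[k] u = (extM φ)^[p * k] u := by
  have hfun : extM (fun a => (extM φ)^[p] [a]) = (extM φ)^[p] := funext (extM_pow φ p)
  rw [hfun, ← Function.iterate_mul]


/-- With `p > q` as above and `G_i = (A_i, φ^p, φ^i(w))`, every infinite
factor `winf` of `L_G` is an infinite factor of `L_{G_i}` for some `q ≤ i < q + p`. -/
theorem stmt5 {A : Type*} [Fintype A]
    (φ : A → List A) (w : List A) (hφ : NonErasing φ)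
    (p q : ℕ) (hp : 0 < p) (hpq : q < p)
    (hper : ∀ a ∈ w, ∀ i : ℕ, q ≤ i →
      alph ((extM φ)^[i] [a]) = alph ((extM φ)^[i + p] [a]))
    (winf : ℕ → A) (hwinf : ∀ n : ℕ, prefW winf n ∈ LangD0L φ w) :
    ∃ i : ℕ, q ≤ i ∧ i < q + p ∧
      ∀ n : ℕ, prefW winf n ∈ LangD0L (fun a => (extM φ)^[p] [a]) ((extM φ)^[i] w) := by
  classical
  set N := (Finset.range q).sup (fun m => ((extM φ)^[m] w).length) + 1 with hN
  have hm : ∀ n, q ≤ Classical.choose (hwinf (N + n)) := by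
    intro n
    by_contra h
    push_neg at h
    have hspec := Classical.choose_spec (hwinf (N + n))
    have hlen : (prefW winf (N + n)).length ≤ ((extM φ)^[Classical.choose (hwinf (N + n))] w).length :=
      hspec.length_le
    have h1 : (prefW winf (N + n)).length = N + n := by simp [prefW]
    have h2 : ((extM φ)^[Classical.choose (hwinf (N + n))] w).length ≤ N - 1 := by
      have := Finset.le_sup (f := fun m => ((extM φ)^[m] w).length)
        (Finset.mem_range.mpr h)
      omega
    omega
  set g : ℕ → Fin p := fun n => ⟨(Classical.choose (hwinf (N + n)) - q) % p, Nat.mod_lt _ hp⟩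
    with hg
  obtain ⟨j, hj⟩ := Finite.exists_infinite_fiber g
  rw [Set.infinite_coe_iff] at hj
  refine ⟨q + (j : ℕ), le_add_of_nonneg_right (Nat.zero_le _), by omega, fun n => ?_⟩
  obtain ⟨b, hb, hnb⟩ := hj.exists_gt n
  have hbj : g b = j := hb
  set m := Classical.choose (hwinf (N + b)) with hmdef
  have hspec : prefW winf (N + b) <:+: (extM φ)^[m] w := Classical.choose_spec (hwinf (N + b))
  have hq : q ≤ m := hm b
  have hmodj : (m - q) % p = (j : ℕ) := congrArg Fin.val hbj
  have hmeq : m = (q + (j : ℕ)) + p * ((m - q) / p) := by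
    have := Nat.mod_add_div (m - q) p
    omega
  refine ⟨(m - q) / p, ?_⟩
  rw [iterPhi]
  have : prefW winf n <:+: prefW winf (N + b) :=
    (prefW_prefix winf (by omega)).isInfix
  refine this.trans ?_
  rw [← Function.iterate_add_apply, show p * ((m - q) / p) + (q + (j:ℕ)) = m by omega]
  exact hspec
end

section
/- Let φ: A* → A* be a non-erasing morphism over a finite alphabet A satisfying alph(φ^n(a)) = alph(φ(a)) for every a ∈ A and every n ≥ 1. Let A' be a leaf of the tree of invariant subalphabets of φ. Then for every unbounded letter a ∈ A', one has alph(φ²(a)) = A'. -/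
lemma iter_flatMap {A : Type*} (φ : A → List A) (n : ℕ) (w : List A) :
    (extM φ)^[n] w = w.flatMap (fun a => (extM φ)^[n] [a]) := by
  induction n generalizing w with
  | zero => simp
  | succ n ih =>
      rw [Function.iterate_succ_apply]
      show (extM φ)^[n] (w.flatMap φ) = _
      rw [ih]
      rw [List.flatMap_assoc]
      congr 1
      funext a
      rw [Function.iterate_succ_apply]
      show _ = (extM φ)^[n] ([a].flatMap φ)
      rw [List.flatMap_singleton, ih]

lemma alph_sq {A : Type*} (φ : A → List A) (b : A) :
    alph ((extM φ)^[2] [b]) = alphIm φ (alph (φ b)) := by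
  have h2 : (extM φ)^[2] [b] = (φ b).flatMap φ := by
    rw [iter_flatMap φ 2 [b]]
    simp only [List.flatMap_singleton]
    rw [show (2:ℕ) = 1 + 1 from rfl, Function.iterate_add_apply]
    show (extM φ)^[1] ([b].flatMap φ) = _
    simp [iter_flatMap φ 1, extM]
  ext c
  simp [h2, alph, alphIm, List.mem_flatMap]

lemma alph_inv {A : Type*} (φ : A → List A)
    (hstar : ∀ (a : A) (n : ℕ), 1 ≤ n → alph ((extM φ)^[n] [a]) = alph (φ a)) (b : A) :
    alphIm φ (alph (φ b)) = alph (φ b) := by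
  rw [← alph_sq]; exact hstar b 2 (by norm_num)

lemma exists_unbdd {A : Type*} (φ : A → List A) (b : A) (hb : ¬ BddLetter φ b) :
    ∃ c ∈ φ b, ¬ BddLetter φ c := by
  by_contra h
  push_neg at h
  apply hb
  classical
  have hall : ∀ c ∈ φ b, BddLetter φ c := fun c hc => h c hc
  set C : A → ℕ := fun c => if hc : BddLetter φ c then hc.choose else 0 with hC
  refine ⟨max 1 (((φ b).map C).sum), fun n => ?_⟩
  cases n with
  | zero => simp
  | succ n =>
      rw [Function.iterate_succ_apply]
      show ((extM φ)^[n] ([b].flatMap φ)).length ≤ _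
      simp only [List.flatMap_singleton]
      rw [iter_flatMap φ n (φ b), List.length_flatMap]
      refine le_trans ?_ (le_max_right _ _)
      apply List.sum_le_sum
      intro c hc
      have hbdd := hall c hc
      have hspec := hbdd.choose_spec n
      have : C c = hbdd.choose := by simp [hC, dif_pos hbdd]
      rw [this]
      exact hspec

lemma key_step {A : Type*} [Fintype A] (φ : A → List A)
    (hstar : ∀ (a : A) (n : ℕ), 1 ≤ n → alph ((extM φ)^[n] [a]) = alph (φ a))
    (A' : Set A) (hA' : IsLeaf φ A') :
    ∀ n (b : A), (alph (φ b)).ncard = n → ¬ BddLetter φ b → alph (φ b) ⊆ A' →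
      alph (φ b) = A' := by
  intro n
  induction n using Nat.strong_induction_on with
  | _ n ih =>
      intro b hcard hb hsub
      obtain ⟨c, hc, hcu⟩ := exists_unbdd φ b hb
      have hcsub : alph (φ c) ⊆ alph (φ b) := by
        rw [← alph_inv φ hstar b]
        exact Set.subset_biUnion_of_mem (u := fun x => alph (φ x)) hc
      rcases lt_or_eq_of_le (hcsub : alph (φ c) ≤ alph (φ b)) with hlt | heq
      · have hlt' : (alph (φ c)).ncard < n := by
          rw [← hcard]
          exact Set.ncard_lt_ncard hlt (Set.toFinite _)
        have := ih _ hlt' c rfl hcu (hcsub.trans hsub)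
        exact subset_antisymm hsub (this ▸ hcsub)
      · have hcc : c ∈ alph (φ c) := by rw [heq]; exact hc
        have hvert : IsVertex φ (alph (φ c)) :=
          ⟨⟨c, hcc⟩, alph_inv φ hstar c, c, hcc, hcu, rfl⟩
        have := hA'.2 _ hvert (heq ▸ hsub)
        rw [← heq, this]

/-- Under Assumption ∗, if `A'` is a leaf of the tree of invariant
subalphabets, then `alph(φ²(a)) = A'` for every unbounded `a ∈ A'`. -/
theorem stmt8 {A : Type*} [Fintype A] (φ : A → List A) (hφ : NonErasing φ)
    (hstar : ∀ (a : A) (n : ℕ), 1 ≤ n → alph ((extM φ)^[n] [a]) = alph (φ a))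
    (A' : Set A) (hA' : IsLeaf φ A')
    (a : A) (ha : a ∈ A') (hau : ¬ BddLetter φ a) :
    alph ((extM φ)^[2] [a]) = A' := by
  rw [hstar a 2 (by norm_num)]
  have hsub : alph (φ a) ⊆ A' := by
    have := hA'.1.2.1
    rw [← this]
    exact Set.subset_biUnion_of_mem (u := fun x => alph (φ x)) ha
  exact key_step φ hstar A' hA' _ a rfl hau hsub
end
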